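/- Assume additionally a' > 0 and b' > 0. Then the implicit solution map satisfies, for all (ũ, ṽ) ∈ (0,∞)², the bounds -c'/a' ≤ ∂_ṽ u_a*(ũ,ṽ) = -∂_ṽ u_b*(ũ,ṽ) ≤ d'/b'. -/

import Mathlib

open Real

theorem slow_manifold_v_derivative_bounds (α β A B a' b' c' d' : ℝ)
    (hα : 0 < α) (hβ : 0 < β) (hA : 0 < A) (hB : 0 ≤ B) (hBβ : β < 1 → 0 < B)
    (ha' : 0 < a') (hb' : 0 < b') (hc' : 0 ≤ c') (hd' : 0 ≤ d')
    (q : ℝ → ℝ → ℝ → ℝ)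
    (hq : ∀ u_a u_b v, q u_a u_b v =
      (B + (b' * u_b + d' * v)) ^ β * u_b - (A + (a' * u_a + c' * v)) ^ α * u_a)
    (ua' ub' : ℝ × ℝ → ℝ)
    -- (ua*, ub*) is the slow-manifold solution map
    (hsol : ∀ p : ℝ × ℝ, 0 ≤ p.1 → 0 ≤ p.2 →
      0 ≤ ua' p ∧ 0 ≤ ub' p ∧ ua' p + ub' p = p.1 ∧ q (ua' p) (ub' p) p.2 = 0)
    (hreg : ContDiffOn ℝ 1 ua' (Set.Ioi 0 ×ˢ Set.Ioi 0) ∧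
            ContDiffOn ℝ 1 ub' (Set.Ioi 0 ×ˢ Set.Ioi 0)) :
    ∀ u v : ℝ, 0 < u → 0 < v →
      -c' / a' ≤ deriv (fun t => ua' (u, t)) v ∧
      deriv (fun t => ua' (u, t)) v = -deriv (fun t => ub' (u, t)) v ∧
      deriv (fun t => ua' (u, t)) v ≤ d' / b' := by
  obtain ⟨hregA, _⟩ := hreg
  intro u v hu hv
  have hSopen : IsOpen ((Set.Ioi (0:ℝ)) ×ˢ (Set.Ioi (0:ℝ))) :=
    isOpen_Ioi.prod isOpen_Ioi
  have hmem : ((u, v) : ℝ × ℝ) ∈ (Set.Ioi (0:ℝ)) ×ˢ (Set.Ioi (0:ℝ)) := ⟨hu, hv⟩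
  obtain ⟨hua0, hub0, hsum, hqz⟩ := hsol (u, v) hu.le hv.le
  simp only at hua0 hub0 hsum hqz
  set uav := ua' (u, v) with huav
  set ubv := ub' (u, v) with hubv
  rw [hq] at hqz
  -- positivity of the two components
  have hub_pos : 0 < ubv := by
    rcases lt_or_eq_of_le hub0 with h | h
    · exact h
    · exfalso
      have huaeq : uav = u := by linarith
      have hbase : 0 < A + (a' * uav + c' * v) := by nlinarith
      have : (A + (a' * uav + c' * v)) ^ α * uav > 0 :=
        mul_pos (Real.rpow_pos_of_pos hbase α) (by rw [huaeq]; exact hu)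
      rw [← h, mul_zero, zero_sub, neg_eq_zero] at hqz
      linarith
  have hua_pos : 0 < uav := by
    rcases lt_or_eq_of_le hua0 with h | h
    · exact h
    · exfalso
      have hubeq : ubv = u := by linarith
      have hbase : 0 < B + (b' * ubv + d' * v) := by nlinarith
      have : (B + (b' * ubv + d' * v)) ^ β * ubv > 0 :=
        mul_pos (Real.rpow_pos_of_pos hbase β) (by rw [hubeq]; exact hu)
      rw [← h, mul_zero, sub_zero] at hqz
      linarith
  have hsb_pos : 0 < B + (b' * ubv + d' * v) := by nlinarith
  have hsa_pos : 0 < A + (a' * uav + c' * v) := by nlinarith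
  have hueq : u - uav = ubv := by linarith
  -- differentiability of t ↦ ua' (u, t) at v
  have hdiffP : DifferentiableAt ℝ ua' (u, v) :=
    (hregA.contDiffAt (hSopen.mem_nhds hmem)).differentiableAt one_ne_zero
  have hdiff : DifferentiableAt ℝ (fun t => ua' (u, t)) v :=
    hdiffP.comp v ((differentiableAt_const u).prodMk differentiableAt_id)
  set da := deriv (fun t => ua' (u, t)) v with hda_def
  have hda : HasDerivAt (fun t => ua' (u, t)) da v := hdiff.hasDerivAt
  -- eventual identities
  have hev : ∀ᶠ t in nhds v, 0 < t := eventually_gt_nhds hv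
  have hub_eq : (fun t => ub' (u, t)) =ᶠ[nhds v] (fun t => u - ua' (u, t)) := by
    filter_upwards [hev] with t ht
    have := (hsol (u, t) hu.le ht.le).2.2.1
    simp only at this
    linarith
  -- the implicit function F and its eventual vanishing
  set F : ℝ → ℝ := fun t =>
    (B + (b' * (u - ua' (u, t)) + d' * t)) ^ β * (u - ua' (u, t)) -
      (A + (a' * ua' (u, t) + c' * t)) ^ α * (ua' (u, t)) with hF_def
  have hF0 : F =ᶠ[nhds v] (fun _ => (0:ℝ)) := by
    filter_upwards [hev] with t ht
    obtain ⟨_, _, hs, hz⟩ := hsol (u, t) hu.le ht.le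
    simp only at hs hz
    rw [hq] at hz
    have hbe : ub' (u, t) = u - ua' (u, t) := by linarith
    simp only [hF_def, ← hbe]
    exact hz
  -- derivative of F via chain rule
  have hubf : HasDerivAt (fun t => u - ua' (u, t)) (-da) v := by
    simpa [Pi.sub_def] using (hasDerivAt_const v u).sub hda
  have hsbf : HasDerivAt (fun t => B + (b' * (u - ua' (u, t)) + d' * t))
      (b' * (-da) + d' * 1) v := by
    simpa [Pi.add_def] using (hasDerivAt_const v B).add ((hubf.const_mul b').add
      ((hasDerivAt_id v).const_mul d'))
  have hsaf : HasDerivAt (fun t => A + (a' * ua' (u, t) + c' * t))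
      (a' * da + c' * 1) v := by
    simpa [Pi.add_def] using (hasDerivAt_const v A).add ((hda.const_mul a').add
      ((hasDerivAt_id v).const_mul c'))
  have hrb : HasDerivAt (fun t => (B + (b' * (u - ua' (u, t)) + d' * t)) ^ β)
      (β * (B + (b' * ubv + d' * v)) ^ (β - 1) * (b' * (-da) + d' * 1)) v := by
    have := (Real.hasDerivAt_rpow_const
      (x := B + (b' * (u - ua' (u, v)) + d' * v)) (p := β)
      (Or.inl (by rw [show u - ua' (u, v) = ubv by rw [← huav]; linarith]; exact hsb_pos.ne'))).comp v hsbf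
    simpa [show u - ua' (u, v) = ubv by rw [← huav]; linarith, mul_comm, mul_assoc, Function.comp_def] using this
  have hra : HasDerivAt (fun t => (A + (a' * ua' (u, t) + c' * t)) ^ α)
      (α * (A + (a' * uav + c' * v)) ^ (α - 1) * (a' * da + c' * 1)) v := by
    have := (Real.hasDerivAt_rpow_const
      (x := A + (a' * ua' (u, v) + c' * v)) (p := α)
      (Or.inl (by rw [← huav]; exact hsa_pos.ne'))).comp v hsaf
    simpa [← huav, Function.comp_def] using this
  have hF' : HasDerivAt F
      ((β * (B + (b' * ubv + d' * v)) ^ (β - 1) * (b' * (-da) + d' * 1)) * (u - uav)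
        + (B + (b' * ubv + d' * v)) ^ β * (-da)
        - ((α * (A + (a' * uav + c' * v)) ^ (α - 1) * (a' * da + c' * 1)) * uav
        + (A + (a' * uav + c' * v)) ^ α * da)) v := by
    have h1 := hrb.mul hubf
    have h2 := hra.mul hda
    have := h1.sub h2
    simpa [hF_def, ← huav, hueq, Pi.sub_def, Pi.mul_def] using this
  have hFzero : HasDerivAt F 0 v :=
    (hasDerivAt_const v (0:ℝ)).congr_of_eventuallyEq hF0
  have key := hF'.unique hFzero
  -- abbreviations
  set pb := (B + (b' * ubv + d' * v)) ^ (β - 1) with hpb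
  set pa := (A + (a' * uav + c' * v)) ^ (α - 1) with hpa
  set qb := (B + (b' * ubv + d' * v)) ^ β with hqb
  set qa := (A + (a' * uav + c' * v)) ^ α with hqa
  have hpb_pos : 0 < pb := Real.rpow_pos_of_pos hsb_pos _
  have hpa_pos : 0 < pa := Real.rpow_pos_of_pos hsa_pos _
  have hqb_pos : 0 < qb := Real.rpow_pos_of_pos hsb_pos _
  have hqa_pos : 0 < qa := Real.rpow_pos_of_pos hsa_pos _
  rw [hueq] at key
  -- key : β * pb * (b' * (-da) + d' * 1) * ubv + qb * (-da)
  --        - (α * pa * (a' * da + c' * 1) * uav + qa * da) = 0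
  -- derivative of ub' component
  have hdb : deriv (fun t => ub' (u, t)) v = -da := by
    have : HasDerivAt (fun t => ub' (u, t)) (-da) v :=
      hubf.congr_of_eventuallyEq hub_eq
    exact this.deriv
  refine ⟨?_, by rw [hdb]; ring, ?_⟩ <;>
  clear_value da pb pa qb qa uav ubv <;>
  clear hdb hF' hFzero hF0 hrb hra hsaf hsbf hubf hda hdiff hdiffP hub_eq hev
    hsol hq hregA hqz hF_def hsb_pos hsa_pos hueq hsum hmem hSopen hqa hqb hpa hpb
    huav hubv hda_def F q
  · rw [div_le_iff₀ ha']
    nlinarith [mul_nonneg (mul_nonneg hc' hqb_pos.le) (le_of_lt hub_pos),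
      mul_nonneg hc' hqa_pos.le,
      mul_nonneg (mul_nonneg (mul_nonneg hα.le hpa_pos.le) hc') hua_pos.le,
      mul_nonneg (mul_nonneg (mul_nonneg (mul_nonneg hβ.le hpb_pos.le) hd') hub_pos.le) ha'.le,
      mul_nonneg (mul_nonneg (mul_nonneg (mul_nonneg hβ.le hpb_pos.le) hc') hub_pos.le) hb'.le,
      mul_pos (mul_pos (mul_pos hβ hpb_pos) hb') hub_pos,
      mul_pos (mul_pos (mul_pos hα hpa_pos) ha') hua_pos]
  · rw [le_div_iff₀ hb']
    nlinarith [mul_nonneg hd' hqb_pos.le, mul_nonneg hd' hqa_pos.le,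
      mul_nonneg (mul_nonneg (mul_nonneg hα.le hpa_pos.le) hc') hua_pos.le,
      mul_nonneg (mul_nonneg (mul_nonneg (mul_nonneg hα.le hpa_pos.le) hd') hua_pos.le) ha'.le,
      mul_nonneg (mul_nonneg (mul_nonneg (mul_nonneg hα.le hpa_pos.le) hc') hua_pos.le) hb'.le,
      mul_pos (mul_pos (mul_pos hβ hpb_pos) hb') hub_pos,
      mul_pos (mul_pos (mul_pos hα hpa_pos) ha') hua_pos]
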